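/- Let f : ℝ² → ℝ be a function that is real-analytic in a neighborhood of 0, and suppose there exist γ > 0 non-integer and, for every unit vector p ∈ ℝ² with |p| = 1, a constant C_p > 0 and δ_p > 0 such that |f(tp)| ≤ C_p t^{γ} for all t ∈ (0, δ_p). Then |f(a)| = O(|a|^{1 + ⌊γ⌋}) as |a| → 0, where ⌊γ⌋ is the floor of γ. -/

import Mathlib

open Filter Topology Asymptotics

/-- If `f : ℝ² → ℝ` is real-analytic near `0`, `γ > 0` is non-integer, and along every ray
`{tp : t > 0}` one has `|f(tp)| ≤ C_p t^γ` for small `t`, then `|f(a)| = O(|a|^{1+⌊γ⌋})`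
as `|a| → 0`. -/
theorem analytic_directional_bound_implies_order
    (f : EuclideanSpace ℝ (Fin 2) → ℝ) (hf : AnalyticAt ℝ f 0)
    (γ : ℝ) (hγ : 0 < γ) (hγ' : ∀ n : ℤ, γ ≠ (n:ℝ))
    (hdir : ∀ p : EuclideanSpace ℝ (Fin 2), ‖p‖ = 1 →
      ∃ C > (0:ℝ), ∃ δ > (0:ℝ), ∀ t ∈ Set.Ioo (0:ℝ) δ, |f (t • p)| ≤ C * t ^ γ) :
    ∃ C > (0:ℝ), ∃ δ > (0:ℝ), ∀ a : EuclideanSpace ℝ (Fin 2),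
      ‖a‖ < δ → |f a| ≤ C * ‖a‖ ^ (1 + (⌊γ⌋ : ℝ)) := by
  obtain ⟨p, hp⟩ := hf
  -- every unit-direction coefficient below γ vanishes
  have keyU : ∀ k : ℕ, (k : ℝ) < γ → ∀ u : EuclideanSpace ℝ (Fin 2), ‖u‖ = 1 →
      p k (fun _ => u) = 0 := by
    intro k
    induction k using Nat.strong_induction_on with
    | _ k IH =>
      intro hkγ u hu
      set c : ℝ := p k (fun _ => u) with hc
      -- partial sums along the ray
      have hps : ∀ t : ℝ, p.partialSum (k+1) (t • u) = t ^ k * c := by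
        intro t
        rw [FormalMultilinearSeries.partialSum]
        rw [Finset.sum_eq_single k]
        · have : (fun _ : Fin k => t • u) = (fun i : Fin k => t • (fun _ : Fin k => u) i) := rfl
          rw [this, ContinuousMultilinearMap.map_smul_univ]
          simp [hc]
        · intro j hj hjk
          have hjk' : j < k := lt_of_le_of_ne (Nat.lt_succ_iff.mp (Finset.mem_range.mp hj)) hjk
          have : (fun _ : Fin j => t • u) = (fun i : Fin j => t • (fun _ : Fin j => u) i) := rfl
          rw [this, ContinuousMultilinearMap.map_smul_univ,
            IH j hjk' (lt_trans (by exact_mod_cast Nat.cast_lt.mpr hjk') hkγ) u hu]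
          simp
        · simp
      -- Taylor big-O along the ray
      have hO := hp.isBigO_sub_partialSum_pow (k+1)
      have htend : Tendsto (fun t : ℝ => t • u) (𝓝[>] (0:ℝ)) (𝓝 (0:EuclideanSpace ℝ (Fin 2))) := by
        have : Tendsto (fun t : ℝ => t • u) (𝓝 (0:ℝ)) (𝓝 ((0:ℝ) • u)) :=
          (continuous_id.smul continuous_const).tendsto 0
        rw [zero_smul] at this
        exact this.mono_left nhdsWithin_le_nhds
      have hO2 : (fun t : ℝ => f (t • u) - t ^ k * c) =O[𝓝[>] (0:ℝ)]
          (fun t : ℝ => |t| ^ (k+1)) := by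
        refine (hO.comp_tendsto htend).congr (fun t => ?_) (fun t => ?_)
        · simp [Function.comp, hps]
        · simp [Function.comp, norm_smul, hu, Real.norm_eq_abs]
      obtain ⟨C₁, hC₁⟩ := hO2.bound
      obtain ⟨C, hC, δ, hδ, hb⟩ := hdir u hu
      -- |c| ≤ C t^(γ-k) + C₁ t eventually for t > 0
      have hev : ∀ᶠ t in 𝓝[>] (0:ℝ), |c| ≤ C * t ^ (γ - (k:ℝ)) + C₁ * t := by
        filter_upwards [hC₁,
          Ioo_mem_nhdsGT_of_mem (by constructor <;> simp [hδ] : (0:ℝ) ∈ Set.Ico 0 δ),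
          self_mem_nhdsWithin] with t h1 h2 (ht : 0 < t)
        have h3 : |f (t • u)| ≤ C * t ^ γ := hb t h2
        have habs : |t| = t := abs_of_pos ht
        rw [Real.norm_eq_abs, Real.norm_eq_abs, habs, abs_of_pos (pow_pos ht (k+1))] at h1
        have h4 : |t ^ k * c| ≤ |f (t • u)| + C₁ * t ^ (k+1) := by
          have := abs_sub_abs_le_abs_sub (t ^ k * c) (f (t • u))
          rw [abs_sub_comm] at this
          nlinarith [abs_nonneg (t ^ k * c), abs_nonneg (f (t•u))]
        have h5 : t ^ k * |c| ≤ C * t ^ γ + C₁ * t ^ (k+1) := by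
          rw [abs_mul, abs_of_pos (pow_pos ht k)] at h4
          linarith
        have htk : (0:ℝ) < t ^ k := pow_pos ht k
        rw [← mul_le_mul_iff_of_pos_right htk]
        calc |c| * t ^ k = t ^ k * |c| := mul_comm _ _
          _ ≤ C * t ^ γ + C₁ * t ^ (k+1) := h5
          _ = (C * t ^ (γ - (k:ℝ)) + C₁ * t) * t ^ k := by
              rw [add_mul]
              congr 1
              · rw [mul_assoc]
                congr 1
                rw [← Real.rpow_natCast t k, ← Real.rpow_add ht]
                ring_nf
              · rw [mul_assoc, pow_succ]
                ring
      -- the RHS tends to 0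
      have htend0 : Tendsto (fun t : ℝ => C * t ^ (γ - (k:ℝ)) + C₁ * t) (𝓝[>] (0:ℝ)) (𝓝 0) := by
        have h1 : Tendsto (fun t : ℝ => t ^ (γ - (k:ℝ))) (𝓝 (0:ℝ)) (𝓝 ((0:ℝ) ^ (γ - (k:ℝ)))) :=
          (Real.continuousAt_rpow_const 0 _ (Or.inr (by linarith))).tendsto
        rw [Real.zero_rpow (by intro h; linarith [sub_eq_zero.mp h] : γ - (k:ℝ) ≠ 0)] at h1
        have h2 : Tendsto (fun t : ℝ => C * t ^ (γ - (k:ℝ)) + C₁ * t) (𝓝 (0:ℝ))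
            (𝓝 (C * 0 + C₁ * 0)) :=
          (h1.const_mul C).add ((continuous_id.tendsto (0:ℝ)).const_mul C₁)
        rw [mul_zero, mul_zero, add_zero] at h2
        exact h2.mono_left nhdsWithin_le_nhds
      have hc0 : |c| ≤ 0 := ge_of_tendsto htend0 hev
      exact abs_eq_zero.mp (le_antisymm hc0 (abs_nonneg c))
  -- hence all coefficients below γ vanish on the diagonal
  have key : ∀ k : ℕ, (k : ℝ) < γ → ∀ y : EuclideanSpace ℝ (Fin 2), p k (fun _ => y) = 0 := by
    intro k hk y
    rcases eq_or_ne y 0 with rfl | hy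
    · rcases Nat.eq_zero_or_pos k with rfl | hkpos
      · have := keyU 0 hk (EuclideanSpace.single 0 1) (by simp)
        convert this using 2
      · haveI : Nonempty (Fin k) := ⟨⟨0, hkpos⟩⟩
        exact (p k).map_zero
    · set u := ‖y‖⁻¹ • y with hu
      have hny : (0:ℝ) < ‖y‖ := norm_pos_iff.mpr hy
      have hun : ‖u‖ = 1 := by
        rw [hu, norm_smul, norm_inv, norm_norm, inv_mul_cancel₀ hny.ne']
      have hyu : y = ‖y‖ • u := by
        rw [hu, smul_smul, mul_inv_cancel₀ hny.ne', one_smul]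
      have : (fun _ : Fin k => y) = (fun i : Fin k => ‖y‖ • (fun _ : Fin k => u) i) := by
        funext i; exact hyu
      rw [this, ContinuousMultilinearMap.map_smul_univ, keyU k hk u hun, smul_zero]
  -- assemble
  set N : ℕ := ⌊γ⌋.toNat with hNdef
  have hfl : (0:ℤ) ≤ ⌊γ⌋ := Int.floor_nonneg.mpr hγ.le
  have hN : (N:ℝ) = (⌊γ⌋ : ℝ) := by
    exact_mod_cast Int.toNat_of_nonneg hfl
  have hNγ : (N:ℝ) < γ := by
    rw [hN]
    exact lt_of_le_of_ne (Int.floor_le γ) (fun h => hγ' ⌊γ⌋ h.symm)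
  have hpsum : ∀ y : EuclideanSpace ℝ (Fin 2), p.partialSum (N+1) y = 0 := by
    intro y
    rw [FormalMultilinearSeries.partialSum]
    apply Finset.sum_eq_zero
    intro k hk
    have hkN : k ≤ N := Nat.lt_succ_iff.mp (Finset.mem_range.mp hk)
    exact key k (lt_of_le_of_lt (by exact_mod_cast hkN) hNγ) y
  have hO := hp.isBigO_sub_partialSum_pow (N+1)
  have hO' : (fun y : EuclideanSpace ℝ (Fin 2) => f y) =O[𝓝 0] fun y => ‖y‖ ^ (N+1) := by
    refine hO.congr (fun y => ?_) (fun y => rfl)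
    rw [zero_add, hpsum, sub_zero]
  rw [isBigO_iff] at hO'
  obtain ⟨C₂, hC₂⟩ := hO'
  rw [Metric.eventually_nhds_iff] at hC₂
  obtain ⟨ε, hε, hball⟩ := hC₂
  refine ⟨max C₂ 1, lt_of_lt_of_le zero_lt_one (le_max_right _ _), ε, hε, fun a ha => ?_⟩
  have h1 := hball (y := a) (by simpa [dist_zero_right] using ha)
  rw [Real.norm_eq_abs, Real.norm_eq_abs, abs_of_nonneg (pow_nonneg (norm_nonneg a) _)] at h1
  have hexp : ‖a‖ ^ (1 + (⌊γ⌋ : ℝ)) = ‖a‖ ^ (N+1) := by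
    rw [← Real.rpow_natCast ‖a‖ (N+1)]
    congr 1
    push_cast [hN]
    ring
  rw [hexp]
  calc |f a| ≤ C₂ * ‖a‖ ^ (N+1) := h1
    _ ≤ max C₂ 1 * ‖a‖ ^ (N+1) :=
        mul_le_mul_of_nonneg_right (le_max_left _ _) (pow_nonneg (norm_nonneg a) _)
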